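/- Let T be a decorated tree and let [P, Q] be its image under the bijection I to synchronized intervals. For every free leaf ℓ of T, the initial segment of P produced by the traversal just after visiting ℓ is a Dyck path (i.e., it is balanced). Consequently, the free leaves of T are in one-to-one correspondence with the non-initial contacts of P, so fl(T) = cont([P,Q]). -/

import Mathlib

/-- Rooted plane trees with integer labels on the leaves. -/
inductive DTree where
  | leaf : ℤ → DTree
  | node : List DTree → DTree

mutual
/-- The list of leaf labels of a tree, in left-to-right (prefix traversal) order. -/
def leafLabels : DTree → List ℤ
  | .leaf l => [l]
  | .node ts => leafLabelsList ts
def leafLabelsList : List DTree → List ℤ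
  | [] => []
  | t :: ts => leafLabels t ++ leafLabelsList ts
end

/-- The three conditions of decorated trees, for a subtree whose root is at depth `d`:
leaf labels are at least -1 and strictly less than the depth of their parent;
every internal node of positive depth `d` has a descendant leaf labeled at most `d - 2`;
and in any direct subtree of an internal node of depth `d`, a leaf labeled `d` is
preceded in traversal order only by leaves labeled at least `d`. -/
inductive DecoAt : DTree → ℕ → Prop where
  | leaf {l : ℤ} {d : ℕ} (h1 : -1 ≤ l) (h2 : l < (d : ℤ) - 1) : DecoAt (.leaf l) d
  | node {ts : List DTree} {d : ℕ} (hne : ts ≠ [])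
      (h2 : 0 < d → ∃ x ∈ leafLabelsList ts, x ≤ (d : ℤ) - 2)
      (h3 : ∀ t' ∈ ts, ∀ a b, leafLabels t' = a ++ (d : ℤ) :: b → ∀ x ∈ a, (d : ℤ) ≤ x)
      (h4 : ∀ t' ∈ ts, DecoAt t' (d + 1)) : DecoAt (.node ts) d

/-- A decorated tree: the root is at depth 0. -/
def IsDeco (T : DTree) : Prop := DecoAt T 0

/-- The number of free leaves (leaves labeled -1). -/
def fl (T : DTree) : ℕ := (leafLabels T).count (-1)

mutual
/-- Increment leaf labels, where the counter `m` is the number of free leaves (from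
the left) that still must be incremented; once it reaches 0, remaining free leaves
are left untouched. Returns the new tree and the remaining counter. -/
def incUpTo : DTree → ℕ → DTree × ℕ
  | .leaf l, m =>
      if l = -1 then (if 0 < m then (.leaf 0, m - 1) else (.leaf (-1), m))
      else (.leaf (l + 1), m)
  | .node ts, m =>
      let p := incList ts m
      (.node p.1, p.2)
def incList : List DTree → ℕ → List DTree × ℕ
  | [], m => ([], m)
  | t :: ts, m =>
      let p := incUpTo t m
      let q := incList ts p.2
      (p.1 :: q.1, q.2)
end

/-- Δ_T(T,i): attach `T` under a new root vertex and add 1 to every leaf label,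
except for the last `i` free leaves (in traversal order). -/
def deltaT (T : DTree) (i : ℕ) : DTree := .node [(incUpTo T (fl T - i)).1]

mutual
/-- Subtract 1 from every non-free leaf label. -/
def decLeaves : DTree → DTree
  | .leaf l => if l = -1 then .leaf (-1) else .leaf (l - 1)
  | .node ts => .node (decList ts)
def decList : List DTree → List DTree
  | [] => []
  | t :: ts => decLeaves t :: decList ts
end

/-- Π_T: remove the root (which has a unique child) and subtract 1 from every
non-free leaf label. -/
def piT : DTree → DTree
  | .node [t] => decLeaves t
  | t => t

mutual
/-- The upper path `Q` of the image of a decorated tree under the bijection `I`: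
the Dyck path recording the depth variation of the counterclockwise depth-first
traversal of the tree (`u = true` going down an edge, `d = false` going up). -/
def qbody : DTree → List Bool
  | .leaf _ => []
  | .node ts => qlist ts
def qlist : List DTree → List Bool
  | [] => []
  | t :: ts => (true :: (qbody t ++ [false])) ++ qlist ts
end

def qpath : DTree → List Bool
  | .leaf _ => []
  | .node ts => qlist ts

/-- Prepend an up step (for the edge leading to an internal node) to the first block. -/
def consU : List (List Bool × Bool) → List (List Bool × Bool)
  | [] => []
  | (w, f) :: rest => (true :: w, f) :: rest

mutual
/-- Construction of the lower path `P` of the image under `I`, decomposed into one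
block per leaf (in traversal order): the traversal appends `u` for each newly
explored edge and `d^(c(ℓ)+1)` upon reaching a leaf `ℓ`, where `c(ℓ)` is the number
of non-root internal nodes whose certificate (first descendant leaf in traversal
order with label at most depth − 2) is `ℓ`. The state is the list of pending
thresholds `p − 2` of internal nodes of depth `p` still awaiting their certificate;
a leaf labeled `l` certifies exactly the pending nodes with threshold at least `l`.
Each block is paired with a Boolean telling whether its leaf is free. -/
def pb : DTree → ℕ → List ℤ → List (List Bool × Bool) × List ℤ
  | .leaf l, _, D =>
      ([(true :: List.replicate ((D.filter (fun p => l ≤ p)).length + 1) false,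
          decide (l = -1))],
       D.filter (fun p => ¬ l ≤ p))
  | .node ts, d, D =>
      let r := pbList ts (d + 1) (((d : ℤ) - 2) :: D)
      (consU r.1, r.2)
def pbList : List DTree → ℕ → List ℤ → List (List Bool × Bool) × List ℤ
  | [], _, D => ([], D)
  | t :: ts, d, D =>
      let a := pb t d D
      let b := pbList ts d a.2
      (a.1 ++ b.1, b.2)
end

/-- The per-leaf blocks of the lower path of `I(T)`. -/
def blocks : DTree → List (List Bool × Bool)
  | .leaf _ => []
  | .node ts => (pbList ts 1 []).1

/-- The lower path `P` of the image of a decorated tree under the bijection `I`. -/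
def ppath (T : DTree) : List Bool := ((blocks T).map Prod.fst).flatten

/-- The number of non-initial contacts of a path: the number of nonempty balanced
prefixes. -/
def ncontacts (w : List Bool) : ℕ :=
  ((List.range w.length).filter
    (fun j => (w.take (j + 1)).count true = (w.take (j + 1)).count false)).length


section Aux

/-! ### Auxiliary definitions for the proof -/

def exc (w : List Bool) : ℤ := (w.count true : ℤ) - w.count false
def flat (B : List (List Bool × Bool)) : List Bool := (B.map Prod.fst).flatten

lemma exc_append (a b : List Bool) : exc (a ++ b) = exc a + exc b := by
  simp [exc, List.count_append]; ring

lemma exc_cons_true (w : List Bool) : exc (true :: w) = 1 + exc w := by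
  simp [exc, List.count_cons]; ring

lemma flat_cons (w : List Bool) (f : Bool) (B : List (List Bool × Bool)) :
    flat ((w, f) :: B) = w ++ flat B := by simp [flat]

lemma flat_append (A B : List (List Bool × Bool)) : flat (A ++ B) = flat A ++ flat B := by
  simp [flat]

lemma flat_take_len_le (B : List (List Bool × Bool)) (m : ℕ) :
    (flat (B.take m)).length ≤ (flat B).length := by
  conv_rhs => rw [← List.take_append_drop m B]
  rw [flat_append]; simp

lemma flat_take_eq (B : List (List Bool × Bool)) (m : ℕ) :
    (flat B).take ((flat (B.take m)).length) = flat (B.take m) := by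
  rw [show flat B = flat (B.take m) ++ flat (B.drop m) from by
    rw [← flat_append, List.take_append_drop], List.take_left]

lemma flat_take_succ (B : List (List Bool × Bool)) (m : ℕ) (hm : m < B.length) :
    flat (B.take (m+1)) = flat (B.take m) ++ B[m].1 := by
  rw [List.take_succ, flat_append]
  simp [List.getElem?_eq_getElem hm, flat]

lemma flat_take_len_lt (B : List (List Bool × Bool)) (hB : ∀ b ∈ B, b.1 ≠ [])
    (m : ℕ) (hm : m < B.length) :
    (flat (B.take m)).length < (flat (B.take (m+1))).length := by
  rw [flat_take_succ B m hm]
  have : B[m].1 ≠ [] := hB _ (List.getElem_mem _)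
  have : 0 < B[m].1.length := List.length_pos_iff.2 this
  simp; omega

lemma flat_take_mono (B : List (List Bool × Bool)) (hB : ∀ b ∈ B, b.1 ≠ [])
    {m1 m2 : ℕ} (h : m1 < m2) (h2 : m2 ≤ B.length) :
    (flat (B.take m1)).length < (flat (B.take m2)).length := by
  induction m2 with
  | zero => omega
  | succ m ih =>
    rcases Nat.lt_or_ge m1 m with hlt | hge
    · exact lt_trans (ih hlt (by omega)) (flat_take_len_lt B hB m (by omega))
    · have : m1 = m := by omega
      subst this; exact flat_take_len_lt B hB m1 (by omega)

lemma flat_take_pos (B : List (List Bool × Bool)) (hne : B ≠ [])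
    (hB : ∀ b ∈ B, b.1 ≠ []) (m : ℕ) : 0 < (flat (B.take (m+1))).length := by
  match B, hne with
  | (w, f) :: B', _ =>
    have hw : w ≠ [] := hB (w, f) (by simp)
    simp [flat_cons]
    exact Or.inl (List.length_pos_iff.2 hw)

lemma length_filter_not {α : Type*} (p : α → Bool) (l : List α) :
    (l.filter p).length + (l.filter (fun x => !(p x))).length = l.length := by
  induction l with
  | nil => rfl
  | cons a l ih => by_cases h : p a = true <;> simp [List.filter_cons, h] <;> omega

lemma exc_true_rep (j m : ℕ) (hj : j ≤ m) :
    exc ((true :: List.replicate m false).take (j+1)) = 1 - (j : ℤ) := by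
  rw [List.take_succ_cons, List.take_replicate]
  have hmin : j ⊓ m = j := inf_eq_left.mpr hj
  rw [hmin]
  simp [exc, List.count_cons, List.count_replicate]

/-- The inductive invariant for the construction of the lower path. -/
structure Concl (leaves : List ℤ) (D : List ℤ) (B : List (List Bool × Bool))
    (D2 : List ℤ) : Prop where
  flags : B.map Prod.snd = leaves.map (fun l => decide (l = -1))
  dout : D2 = D.filter (fun p => leaves.all (fun x => decide (p < x)))
  bne : ∀ b ∈ B, b.1 ≠ []
  total : exc (flat B) = (D2.length : ℤ) - (D.length : ℤ)
  zero_iff : ∀ n, 0 < n → n ≤ (flat B).length →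
    (((D.length : ℤ) + exc ((flat B).take n) = 0) ↔
      (∃ k, ∃ hk : k < B.length, n = (flat (B.take (k+1))).length ∧
        (B.get ⟨k, hk⟩).2 = true))

lemma concl_leaf (l : ℤ) (d : ℕ) (D : List ℤ) (h1 : -1 ≤ l) (h2 : l < (d:ℤ) - 1)
    (hfree : ∀ p ∈ D, (-1:ℤ) ≤ p)
    (hcert : ∀ (a : List ℤ) (l' : ℤ) (b : List ℤ), ([l] : List ℤ) = a ++ l' :: b → 0 ≤ l' →
      l' ≤ (d:ℤ) - 2 → ∃ p ∈ D, p < l' ∧ ∀ x ∈ a, p < x) :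
    Concl [l] D (pb (.leaf l) d D).1 (pb (.leaf l) d D).2 := by
  have hpb : pb (.leaf l) d D =
      ([(true :: List.replicate ((D.filter (fun p => l ≤ p)).length + 1) false,
          decide (l = -1))],
        D.filter (fun p => ¬ l ≤ p)) := by rw [pb]
  rw [hpb]
  dsimp only
  set k := (D.filter (fun p => decide (l ≤ p))).length with hk
  have hD2 : (D.filter (fun p => decide ¬(l ≤ p))) = D.filter (fun x => !(decide (l ≤ x))) :=
    List.filter_congr (by intro x _; by_cases h : l ≤ x <;> simp [h])
  have hsum : k + (D.filter (fun x => !(decide (l ≤ x)))).length = D.length := by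
    rw [hk]; exact length_filter_not _ D
  have hflat : flat [(true :: List.replicate (k+1) false, decide (l = -1))] =
      true :: List.replicate (k+1) false := by simp [flat]
  refine ⟨?_, ?_, ?_, ?_, ?_⟩
  · simp
  · show D.filter (fun p => decide ¬(l ≤ p)) = _
    rw [hD2]; apply List.filter_congr; intro x _
    by_cases h : l ≤ x <;> simp [h] <;> omega
  · intro b hb; simp at hb; subst hb; simp
  · show exc (flat [(true :: List.replicate (k+1) false, decide (l = -1))]) = _
    rw [hflat]
    show _ = ((D.filter (fun p => decide ¬(l ≤ p))).length : ℤ) - (D.length : ℤ)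
    rw [hD2]
    simp [exc, List.count_cons, List.count_replicate]
    push_cast
    omega
  · intro n hn hnle
    rw [hflat] at hnle ⊢
    simp only [List.length_cons, List.length_replicate] at hnle
    obtain ⟨j, rfl⟩ : ∃ j, n = j + 1 := ⟨n - 1, by omega⟩
    have hj : j ≤ k + 1 := by omega
    rw [exc_true_rep j (k+1) hj]
    have htake1 : flat ([(true :: List.replicate (k+1) false, decide (l = -1))].take 1) =
        true :: List.replicate (k+1) false := by simp [flat]
    constructor
    · intro h0
      have hkD : k ≤ D.length := by rw [hk]; exact List.length_filter_le _ _
      have hkeq : k = D.length := by omega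
      have hl : l = -1 := by
        by_contra hlne
        obtain ⟨p, hpD, hpl, -⟩ := hcert [] l [] rfl (by omega) (by omega)
        have hall : ∀ a ∈ D, decide (l ≤ a) = true :=
          List.length_filter_eq_length_iff.mp (by rw [← hk, hkeq])
        have := hall p hpD
        simp at this; omega
      refine ⟨0, by norm_num, ?_, by simp [hl]⟩
      rw [htake1]
      simp only [List.length_cons, List.length_replicate]
      omega
    · rintro ⟨k', hk', hlen2, hflag⟩
      have hk0 : k' = 0 := by simp at hk'; omega
      subst hk0
      have hl : l = -1 := by simpa using hflag
      have hkeq : k = D.length := by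
        rw [hk, hl]
        have : D.filter (fun p => decide ((-1:ℤ) ≤ p)) = D :=
          List.filter_eq_self.2 (fun a ha => by simpa using hfree a ha)
        rw [this]
      rw [htake1] at hlen2
      simp only [List.length_cons, List.length_replicate] at hlen2
      omega

lemma concl_append {L1 L2 : List ℤ} {Din Dmid Dout : List ℤ}
    {A B : List (List Bool × Bool)}
    (C1 : Concl L1 Din A Dmid) (C2 : Concl L2 Dmid B Dout) :
    Concl (L1 ++ L2) Din (A ++ B) Dout := by
  refine ⟨?_, ?_, ?_, ?_, ?_⟩
  · rw [List.map_append, C1.flags, C2.flags, ← List.map_append]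
  · rw [C2.dout, C1.dout, List.filter_filter]
    apply List.filter_congr; intro x _
    rw [List.all_append]
    exact Bool.and_comm _ _
  · intro b hb
    rcases List.mem_append.1 hb with h | h
    exacts [C1.bne b h, C2.bne b h]
  · rw [flat_append, exc_append, C1.total, C2.total]; ring
  · intro n hn hnle
    rw [flat_append] at hnle ⊢
    rw [List.length_append] at hnle
    rcases le_or_gt n (flat A).length with hcase | hcase
    · rw [List.take_append_of_le_length hcase]
      rw [C1.zero_iff n hn hcase]
      constructor
      · rintro ⟨k, hk, hlen, hflag⟩
        have hk1 : k + 1 ≤ A.length := hk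
        refine ⟨k, ?_, ?_, ?_⟩
        · rw [List.length_append]; omega
        · rw [List.take_append_of_le_length hk1]; exact hlen
        · dsimp only [List.get_eq_getElem] at hflag ⊢
          rw [List.getElem_append_left hk]
          exact hflag
      · rintro ⟨k, hk2, hlen, hflag⟩
        rw [List.length_append] at hk2
        by_cases hkA : k < A.length
        · refine ⟨k, hkA, ?_, ?_⟩
          · rw [List.take_append_of_le_length (by omega : k + 1 ≤ A.length)] at hlen
            exact hlen
          · dsimp only [List.get_eq_getElem] at hflag ⊢
            rw [List.getElem_append_left hkA] at hflag
            exact hflag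
        · exfalso
          rw [show k + 1 = A.length + (k + 1 - A.length) from by omega,
            List.take_length_add_append, flat_append, List.length_append] at hlen
          obtain ⟨i, hi⟩ : ∃ i, k + 1 - A.length = i + 1 := ⟨k - A.length, by omega⟩
          rw [hi] at hlen
          have hBne : B ≠ [] := by
            intro hB0; subst hB0; simp at hk2; omega
          have := flat_take_pos B hBne C2.bne i
          omega
    · have htake : (flat A ++ flat B).take n = flat A ++ (flat B).take (n - (flat A).length) := by
        rw [show n = (flat A).length + (n - (flat A).length) from by omega, List.take_length_add_append,
          Nat.add_sub_cancel_left]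
      rw [htake, exc_append, C1.total]
      rw [show (Din.length : ℤ) + ((Dmid.length : ℤ) - (Din.length : ℤ) +
            exc ((flat B).take (n - (flat A).length)))
          = (Dmid.length : ℤ) + exc ((flat B).take (n - (flat A).length)) from by ring]
      rw [C2.zero_iff (n - (flat A).length) (by omega) (by omega)]
      constructor
      · rintro ⟨k', hk', hlen, hflag⟩
        refine ⟨A.length + k', ?_, ?_, ?_⟩
        · rw [List.length_append]; omega
        · rw [Nat.add_assoc, List.take_length_add_append, flat_append, List.length_append]
          omega
        · dsimp only [List.get_eq_getElem] at hflag ⊢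
          rw [List.getElem_append_right (by omega : A.length ≤ A.length + k')]
          simpa using hflag
      · rintro ⟨k, hk2, hlen, hflag⟩
        rw [List.length_append] at hk2
        by_cases hkA : k < A.length
        · exfalso
          rw [List.take_append_of_le_length (by omega : k + 1 ≤ A.length)] at hlen
          have := flat_take_len_le A (k+1)
          omega
        · refine ⟨k - A.length, by omega, ?_, ?_⟩
          · rw [show k + 1 = A.length + (k - A.length + 1) from by omega, List.take_length_add_append,
              flat_append, List.length_append] at hlen
            omega
          · dsimp only [List.get_eq_getElem] at hflag ⊢
            rw [List.getElem_append_right (by omega : A.length ≤ k)] at hflag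
            exact hflag

lemma concl_node {leaves D D2 : List ℤ} {R : List (List Bool × Bool)} (x0 : ℤ)
    (hx0 : ∃ y ∈ leaves, y ≤ x0) (hR : R ≠ [])
    (C : Concl leaves (x0 :: D) R D2) :
    Concl leaves D (consU R) D2 := by
  obtain ⟨a, rest, rfl⟩ : ∃ a b, R = a :: b := by
    cases R with
    | nil => exact absurd rfl hR
    | cons a b => exact ⟨a, b, rfl⟩
  obtain ⟨w, f⟩ := a
  have hcons : consU ((w, f) :: rest) = (true :: w, f) :: rest := rfl
  have hflat : flat ((true :: w, f) :: rest) = true :: flat ((w, f) :: rest) := by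
    rw [flat_cons, flat_cons]; rfl
  have htake : ∀ m : ℕ, flat (((true :: w, f) :: rest).take (m+1)) =
      true :: flat (((w, f) :: rest).take (m+1)) := by
    intro m
    rw [List.take_succ_cons, List.take_succ_cons, flat_cons, flat_cons]; rfl
  rw [hcons]
  refine ⟨?_, ?_, ?_, ?_, ?_⟩
  · simpa using C.flags
  · rw [C.dout, List.filter_cons]
    have hfalse : (leaves.all fun x => decide (x0 < x)) = false := by
      rcases hx0 with ⟨y, hy, hyx⟩
      apply Bool.eq_false_iff.mpr
      intro hall
      rw [List.all_eq_true] at hall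
      have := hall y hy
      simp at this; omega
    rw [hfalse]; simp
  · intro b hb
    rcases List.mem_cons.1 hb with h | h
    · subst h; simp
    · exact C.bne b (List.mem_cons_of_mem _ h)
  · rw [hflat, exc_cons_true, C.total]
    simp only [List.length_cons]
    push_cast; ring
  · intro n hn hnle
    rw [hflat] at hnle ⊢
    simp only [List.length_cons] at hnle
    obtain ⟨j, rfl⟩ : ∃ j, n = j + 1 := ⟨n - 1, by omega⟩
    rw [List.take_succ_cons, exc_cons_true]
    rcases Nat.eq_zero_or_pos j with hj0 | hjpos
    · subst hj0
      simp only [List.take_zero]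
      constructor
      · intro h0
        exfalso
        simp [exc] at h0
        omega
      · rintro ⟨k, hk, hlen, -⟩
        exfalso
        rw [htake k] at hlen
        simp only [List.length_cons] at hlen
        have := flat_take_pos ((w, f) :: rest) (by simp) C.bne k
        omega
    · have hiff := C.zero_iff j hjpos (by omega)
      rw [show (D.length : ℤ) + (1 + exc ((flat ((w, f) :: rest)).take j)) =
          (((x0 :: D).length : ℤ)) + exc ((flat ((w, f) :: rest)).take j) from by
        simp only [List.length_cons]; push_cast; ring]
      rw [hiff]
      constructor
      · rintro ⟨k, hk, hlen, hflag⟩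
        refine ⟨k, hk, ?_, ?_⟩
        · rw [htake k]
          simp only [List.length_cons]
          omega
        · cases k <;> simpa using hflag
      · rintro ⟨k, hk, hlen, hflag⟩
        refine ⟨k, hk, ?_, ?_⟩
        · rw [htake k] at hlen
          simp only [List.length_cons] at hlen
          omega
        · cases k <;> simpa using hflag

lemma leaves_ne_nil {t : DTree} {d : ℕ} (h : DecoAt t d) : leafLabels t ≠ [] := by
  induction h with
  | leaf h1 h2 => simp [leafLabels]
  | @node ts d hne h2 h3 h4 ih =>
    match ts, hne, ih with
    | t0 :: ts', _, ih =>
      have := ih t0 (by simp)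
      rw [leafLabels, leafLabelsList]
      simp [this]

lemma clist (d : ℕ) : ∀ (ts : List DTree),
    (∀ t' ∈ ts, ∀ D : List ℤ, (∀ p ∈ D, (-1:ℤ) ≤ p) →
      (∀ a b, leafLabels t' = a ++ ((d:ℤ)-1) :: b → ∀ x ∈ a, (d:ℤ)-1 ≤ x) →
      (∀ a l b, leafLabels t' = a ++ l :: b → 0 ≤ l → l ≤ (d:ℤ)-2 →
        ∃ p ∈ D, p < l ∧ ∀ x ∈ a, p < x) →
      Concl (leafLabels t') D (pb t' d D).1 (pb t' d D).2) →
    ∀ D : List ℤ, (∀ p ∈ D, (-1:ℤ) ≤ p) →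
    (∀ t' ∈ ts, ∀ a b, leafLabels t' = a ++ ((d:ℤ)-1) :: b → ∀ x ∈ a, (d:ℤ)-1 ≤ x) →
    (∀ a l b, leafLabelsList ts = a ++ l :: b → 0 ≤ l → l ≤ (d:ℤ)-2 →
      ∃ p ∈ D, p < l ∧ ∀ x ∈ a, p < x) →
    Concl (leafLabelsList ts) D (pbList ts d D).1 (pbList ts d D).2 := by
  intro ts
  induction ts with
  | nil =>
    intro _ D hfree _ _
    have hpb : pbList [] d D = ([], D) := by rw [pbList]
    have hlv : leafLabelsList [] = [] := by rw [leafLabelsList]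
    rw [hpb, hlv]
    refine ⟨rfl, by simp, by simp, by simp [flat, exc], ?_⟩
    intro n hn hnle
    simp [flat] at hnle
    omega
  | cons t ts ih =>
    intro hIH D hfree h3each hcertL
    have hpb : pbList (t :: ts) d D =
        ((pb t d D).1 ++ (pbList ts d (pb t d D).2).1, (pbList ts d (pb t d D).2).2) := by
      rw [pbList]
    have hlv : leafLabelsList (t :: ts) = leafLabels t ++ leafLabelsList ts := by
      rw [leafLabelsList]
    have hC1 : Concl (leafLabels t) D (pb t d D).1 (pb t d D).2 := by
      apply hIH t (by simp) D hfree (h3each t (by simp))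
      intro a l b hdec hl0 hld
      exact hcertL a l (b ++ leafLabelsList ts)
        (by rw [hlv, hdec]; simp) hl0 hld
    have hfree2 : ∀ p ∈ (pb t d D).2, (-1:ℤ) ≤ p := by
      intro p hp
      rw [hC1.dout] at hp
      exact hfree p (List.mem_of_mem_filter hp)
    have hC2 : Concl (leafLabelsList ts) (pb t d D).2 (pbList ts d (pb t d D).2).1
        (pbList ts d (pb t d D).2).2 := by
      apply ih (fun t' ht' => hIH t' (by simp [ht'])) _ hfree2
        (fun t' ht' => h3each t' (by simp [ht']))
      intro a l b hdec hl0 hld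
      obtain ⟨p, hpD, hpl, hpa⟩ := hcertL (leafLabels t ++ a) l b
        (by rw [hlv, hdec]; simp) hl0 hld
      refine ⟨p, ?_, hpl, fun x hx => hpa x (by simp [hx])⟩
      rw [hC1.dout, List.mem_filter]
      refine ⟨hpD, ?_⟩
      rw [List.all_eq_true]
      intro x hx
      exact decide_eq_true (hpa x (by simp [hx]))
    rw [hpb, hlv]
    dsimp only
    exact concl_append hC1 hC2

theorem concl_main {t : DTree} {d : ℕ} (hdec : DecoAt t d) : 1 ≤ d → ∀ D : List ℤ,
    (∀ p ∈ D, (-1:ℤ) ≤ p) →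
    (∀ a b, leafLabels t = a ++ ((d:ℤ) - 1) :: b → ∀ x ∈ a, (d:ℤ) - 1 ≤ x) →
    (∀ a l b, leafLabels t = a ++ l :: b → 0 ≤ l → l ≤ (d:ℤ) - 2 →
      ∃ p ∈ D, p < l ∧ ∀ x ∈ a, p < x) →
    Concl (leafLabels t) D (pb t d D).1 (pb t d D).2 := by
  induction hdec with
  | @leaf l d h1 h2 =>
    intro hd D hfree h3e hcert
    have hl : leafLabels (.leaf l) = [l] := by rw [leafLabels]
    rw [hl] at hcert ⊢
    exact concl_leaf l d D h1 h2 hfree hcert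
  | @node ts d hne h2 h3 h4 ih =>
    intro hd D hfree h3e hcert
    have hpb : pb (.node ts) d D =
        (consU (pbList ts (d+1) (((d:ℤ)-2) :: D)).1,
          (pbList ts (d+1) (((d:ℤ)-2) :: D)).2) := by rw [pb]
    have hcast : ((d+1 : ℕ) : ℤ) - 1 = (d : ℤ) := by push_cast; ring
    have hcast2 : ((d+1 : ℕ) : ℤ) - 2 = (d : ℤ) - 1 := by push_cast; ring
    have hleaves : leafLabels (.node ts) = leafLabelsList ts := by rw [leafLabels]
    rw [hleaves] at h3e hcert ⊢
    have hd1 : (1:ℤ) ≤ (d:ℤ) := by exact_mod_cast hd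
    have hCL : Concl (leafLabelsList ts) (((d:ℤ)-2) :: D)
        (pbList ts (d+1) (((d:ℤ)-2) :: D)).1 (pbList ts (d+1) (((d:ℤ)-2) :: D)).2 := by
      refine clist (d+1) ts ?_ _ ?_ ?_ ?_
      · intro t' ht' D' hf h3' hc'
        exact ih t' ht' (by omega) D' hf h3' hc'
      · intro p hp
        rcases List.mem_cons.1 hp with h | h
        · subst h; omega
        · exact hfree p h
      · intro t' ht' a b hdec
        rw [hcast] at hdec ⊢
        exact h3 t' ht' a b hdec
      · intro a l b hdec hl0 hld
        rw [hcast2] at hld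
        rcases lt_or_eq_of_le hld with hlt | heq
        · obtain ⟨p, hpD, hpl, hpa⟩ := hcert a l b hdec hl0 (by omega)
          exact ⟨p, List.mem_cons_of_mem _ hpD, hpl, hpa⟩
        · refine ⟨(d:ℤ)-2, List.mem_cons_self, by omega, ?_⟩
          intro x hx
          rw [heq] at hdec
          have := h3e a b hdec x hx
          omega
    have hlvne : leafLabelsList ts ≠ [] := by
      match ts, hne with
      | t0 :: ts', _ =>
        have h0 := leaves_ne_nil (h4 t0 (by simp))
        rw [leafLabelsList]
        simp [h0]
    have hR : (pbList ts (d+1) (((d:ℤ)-2) :: D)).1 ≠ [] := by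
      intro h0
      have hfl := hCL.flags
      rw [h0] at hfl
      have := congrArg List.length hfl
      simp at this
      exact hlvne (List.eq_nil_of_length_eq_zero this.symm)
    rw [hpb]
    dsimp only
    exact concl_node ((d:ℤ)-2) (h2 (by omega)) hR hCL

lemma exc_zero_iff_count (w : List Bool) :
    exc w = 0 ↔ w.count true = w.count false := by
  unfold exc; omega

lemma length_filter_range (p : ℕ → Bool) (n : ℕ) :
    ((List.range n).filter p).length = ((Finset.range n).filter (fun k => p k = true)).card := by
  induction n with
  | zero => rfl
  | succ n ih =>
    rw [List.range_succ, List.filter_append, List.length_append, Finset.range_add_one,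
      Finset.filter_insert]
    by_cases h : p n = true
    · rw [if_pos h, Finset.card_insert_of_notMem (by simp)]
      simp [List.filter, h, ih]
    · rw [if_neg h]
      simp [List.filter, h, ih]

lemma countP_range_getD (l : List Bool) :
    (List.range l.length).countP (fun k => l.getD k false) = l.count true := by
  induction l with
  | nil => rfl
  | cons a t ih =>
    rw [List.length_cons, List.range_succ_eq_map, List.countP_cons, List.countP_map]
    have : ((fun k => (a :: t).getD k false) ∘ Nat.succ) = (fun k => t.getD k false) := by
      funext k; simp
    rw [this, ih]
    cases a <;> simp [List.count_cons]

lemma card_filter_eq_count (l : List Bool) :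
    ((Finset.range l.length).filter (fun k => l.getD k false = true)).card = l.count true := by
  rw [← length_filter_range (fun k => l.getD k false) l.length,
    ← List.countP_eq_length_filter, countP_range_getD]

end Aux

theorem stmt18 (T : DTree) (h : IsDeco T) :
    (∀ k, ∀ hk : k < (blocks T).length, ((blocks T).get ⟨k, hk⟩).2 = true →
      ((((blocks T).take (k + 1)).map Prod.fst).flatten.count true =
        (((blocks T).take (k + 1)).map Prod.fst).flatten.count false)) ∧
    fl T = ncontacts (ppath T) := by
  cases T with
  | leaf l =>
    exfalso
    cases h with
    | leaf h1 h2 => simp at h2; omega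
  | node ts =>
    cases h with
    | node hne h2 h3 h4 =>
    have hB : blocks (DTree.node ts) = (pbList ts 1 []).1 := by rw [blocks]
    set R := (pbList ts 1 []).1 with hRdef
    have hCL : Concl (leafLabelsList ts) [] R (pbList ts 1 []).2 := by
      rw [hRdef]
      refine clist 1 ts ?_ [] (by simp) ?_ ?_
      · intro t' ht' D' hf h3' hc'
        exact concl_main (h4 t' ht') le_rfl D' hf h3' hc'
      · intro t' ht' a b hdec
        rw [show ((1:ℕ):ℤ) - 1 = ((0:ℕ):ℤ) from by norm_num] at hdec ⊢
        exact h3 t' ht' a b hdec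
      · intro a l b hdec hl0 hld
        exfalso
        rw [show ((1:ℕ):ℤ) - 2 = -1 from by norm_num] at hld
        omega
    have hlvne : leafLabelsList ts ≠ [] := by
      match ts, hne with
      | t0 :: ts', _ =>
        have h0 := leaves_ne_nil (h4 t0 (by simp))
        rw [leafLabelsList]
        simp [h0]
    have hRne : R ≠ [] := by
      intro h0
      have hfl := hCL.flags
      rw [h0] at hfl
      have := congrArg List.length hfl
      simp at this
      exact hlvne (List.eq_nil_of_length_eq_zero this.symm)
    have key1 : ∀ k (hk : k < R.length), (R.get ⟨k, hk⟩).2 = true →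
        exc (flat (R.take (k+1))) = 0 := by
      intro k hk hflag
      have hpos : 0 < (flat (R.take (k+1))).length := flat_take_pos R hRne hCL.bne k
      have hle : (flat (R.take (k+1))).length ≤ (flat R).length := flat_take_len_le R (k+1)
      have hzi := (hCL.zero_iff _ hpos hle).mpr ⟨k, hk, rfl, hflag⟩
      rw [flat_take_eq] at hzi
      simpa using hzi
    have key2 : ∀ j, j < (flat R).length →
        (((flat R).take (j+1)).count true = ((flat R).take (j+1)).count false) →
        ∃ k, ∃ hk : k < R.length, j + 1 = (flat (R.take (k+1))).length ∧
          (R.get ⟨k, hk⟩).2 = true := by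
      intro j hj hcnt
      have hexc : exc ((flat R).take (j+1)) = 0 := (exc_zero_iff_count _).mpr hcnt
      exact (hCL.zero_iff (j+1) (by omega) (by omega)).mp (by simpa using hexc)
    constructor
    · rw [hB]
      intro k hk hflag
      have h0 := key1 k hk hflag
      rw [exc_zero_iff_count] at h0
      exact h0
    · have hpp : ppath (DTree.node ts) = flat R := by
        show flat (blocks (DTree.node ts)) = flat R
        rw [hB]
      rw [hpp]
      have hfl : fl (DTree.node ts) = (leafLabelsList ts).count (-1) := by
        unfold fl
        rw [show leafLabels (DTree.node ts) = leafLabelsList ts from by rw [leafLabels]]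
      rw [hfl]
      have hcount1 : (leafLabelsList ts).count (-1) = (R.map Prod.snd).count true := by
        rw [hCL.flags]
        rw [List.count_eq_countP, List.count_eq_countP, List.countP_map]
        apply List.countP_congr
        intro x _
        simp
      rw [hcount1, ← card_filter_eq_count (R.map Prod.snd)]
      show _ = ((List.range (flat R).length).filter _).length
      rw [length_filter_range]
      apply Finset.card_bij (fun k _ => (flat (R.take (k+1))).length - 1)
      · intro k hk
        simp only [Finset.mem_filter, Finset.mem_range, List.length_map] at hk
        obtain ⟨hkR, hflag⟩ := hk
        have hflag' : (R.get ⟨k, hkR⟩).2 = true := by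
          rw [List.getD_eq_getElem _ _ (by simpa using hkR)] at hflag
          simpa using hflag
        have hpos : 0 < (flat (R.take (k+1))).length := flat_take_pos R hRne hCL.bne k
        have hle : (flat (R.take (k+1))).length ≤ (flat R).length := flat_take_len_le R (k+1)
        simp only [Finset.mem_filter, Finset.mem_range]
        refine ⟨by omega, ?_⟩
        rw [decide_eq_true_eq]
        have h0 := key1 k hkR hflag'
        rw [exc_zero_iff_count] at h0
        rw [show (flat (R.take (k+1))).length - 1 + 1 = (flat (R.take (k+1))).length from by omega,
          flat_take_eq]
        exact h0
      · intro k1 hk1 k2 hk2 heq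
        simp only [Finset.mem_filter, Finset.mem_range, List.length_map] at hk1 hk2
        have p1 : 0 < (flat (R.take (k1+1))).length := flat_take_pos R hRne hCL.bne k1
        have p2 : 0 < (flat (R.take (k2+1))).length := flat_take_pos R hRne hCL.bne k2
        by_contra hne'
        rcases Nat.lt_or_ge k1 k2 with hlt | hge
        · have := flat_take_mono R hCL.bne (by omega : k1+1 < k2+1) (by omega)
          omega
        · have := flat_take_mono R hCL.bne (by omega : k2+1 < k1+1) (by omega)
          omega
      · intro j hj
        simp only [Finset.mem_filter, Finset.mem_range, decide_eq_true_eq] at hj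
        obtain ⟨hjN, hbal⟩ := hj
        obtain ⟨k, hk, hkj, hflag⟩ := key2 j hjN hbal
        refine ⟨k, ?_, ?_⟩
        · simp only [Finset.mem_filter, Finset.mem_range, List.length_map]
          refine ⟨hk, ?_⟩
          rw [List.getD_eq_getElem _ _ (by simpa using hk)]
          simpa using hflag
        · omega
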